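/- For every ℓ ≥ 1, the ℓ-ton policy class Π_ℓ is an (H+1, ℓ)-sunflower: the core Π_core = {π_0} ∪ {π_h : h ∈ [H]}, where π_0 is identically 0 and π_h(s) = 1 if and only if s ∈ S_h, together with the petal sets S_{π_I} = I, witnesses this. -/
import Mathlib


/-- A partial trajectory from layer `h` to layer `h'` is given by states `σ i ∈ S i` and
actions `α i` for `h ≤ i ≤ h'`; it is consistent with the policy `π` if `π` takes action
`α i` on the state `σ i` for every `h ≤ i ≤ h'`. -/
def Consistent {S : ℕ → Type} {A : Type} (π : ∀ h : ℕ, S h → A)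
    (σ : ∀ i : ℕ, S i) (α : ℕ → A) (h h' : ℕ) : Prop :=
  ∀ i : ℕ, h ≤ i → i ≤ h' → π i (σ i) = α i

/-- `π` is an `Sbar`-petal on the policy set `core` (for horizon `H`): every partial
trajectory from layer `h` to layer `h'` (with `h ≤ h' < H`, `0`-indexed) that is
consistent with `π` is either consistent with some member of `core`, or visits a state of
`Sbar` at some layer `i` with `h < i ≤ h'`.  States are recorded as pairs `⟨i, s⟩` of a
layer and a state of that layer. -/
def IsPetal (H : ℕ) {S : ℕ → Type} {A : Type} (core : Set (∀ h : ℕ, S h → A))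
    (Sbar : Set ((i : ℕ) × S i)) (π : ∀ h : ℕ, S h → A) : Prop :=
  ∀ h h' : ℕ, h ≤ h' → h' < H → ∀ (σ : ∀ i : ℕ, S i) (α : ℕ → A),
    Consistent π σ α h h' →
      (∃ π' ∈ core, Consistent π' σ α h h') ∨ (∃ i : ℕ, h < i ∧ i ≤ h' ∧ ⟨i, σ i⟩ ∈ Sbar)

/-- The policy class `P` is a `(K, D)`-sunflower: there is a core of at most `K` policies
such that every `π ∈ P` is an `S_π`-petal on the core for some set `S_π` of at most `D`
states. -/
def IsSunflower (H : ℕ) {S : ℕ → Type} {A : Type} (K D : ℕ)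
    (P : Set (∀ h : ℕ, S h → A)) : Prop :=
  ∃ core : Set (∀ h : ℕ, S h → A), core.Finite ∧ core.ncard ≤ K ∧
    ∀ π ∈ P, ∃ Sbar : Set ((i : ℕ) × S i), Sbar.Finite ∧ Sbar.ncard ≤ D ∧
      IsPetal H core Sbar π

/-- The `ℓ`-ton policy class over the grid state space with `K` states per layer and binary
actions. -/
def ltonClass (K H ℓ : ℕ) : Set (∀ _ : ℕ, Fin K → Bool) :=
  {π | ∃ I : Finset ((_ : ℕ) × Fin K), I.card ≤ ℓ ∧ (∀ p ∈ I, p.1 < H) ∧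
        π = fun h s => decide (⟨h, s⟩ ∈ I)}

/-- The core policy set `{π_0} ∪ {π_h : h < H}`, where `π_0` is identically `0` (`false`)
and `π_h` takes action `1` (`true`) exactly on the states of layer `h`. -/
def coreClass (K H : ℕ) : Set (∀ _ : ℕ, Fin K → Bool) :=
  insert (fun _ _ => false) {π | ∃ h < H, π = fun i _ => decide (i = h)}

/-- For every `ℓ ≥ 1`, the `ℓ`-ton class `Π_ℓ` is an `(H+1, ℓ)`-sunflower,
witnessed by the core `{π_0} ∪ {π_h : h ∈ [H]}` and the petal sets `S_{π_I} = I`. -/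
theorem lton_sunflower (K H ℓ : ℕ) (hH : 1 ≤ H) (hℓ : 1 ≤ ℓ) :
    (coreClass K H).ncard ≤ H + 1 ∧
      (∀ I : Finset ((_ : ℕ) × Fin K), I.card ≤ ℓ → (∀ p ∈ I, p.1 < H) →
        IsPetal (S := fun _ => Fin K) H (coreClass K H) (↑I)
          (fun h s => decide (⟨h, s⟩ ∈ I))) ∧
      IsSunflower (S := fun _ => Fin K) H (H + 1) ℓ (ltonClass K H ℓ) := by

  have himg : {π : ∀ _ : ℕ, Fin K → Bool | ∃ h < H, π = fun i _ => decide (i = h)}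
      = (fun h => fun i (_ : Fin K) => decide (i = h)) '' (Set.Iio H) := by
    ext π
    simp only [Set.mem_setOf_eq, Set.mem_image, Set.mem_Iio]
    constructor
    · rintro ⟨h, hh, rfl⟩; exact ⟨h, hh, rfl⟩
    · rintro ⟨h, hh, rfl⟩; exact ⟨h, hh, rfl⟩
  have hfin2 : {π : ∀ _ : ℕ, Fin K → Bool | ∃ h < H, π = fun i _ => decide (i = h)}.Finite := by
    rw [himg]; exact (Set.finite_Iio H).image _
  have hcorefin : (coreClass K H).Finite := hfin2.insert _
  have hcard : (coreClass K H).ncard ≤ H + 1 := by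
    refine le_trans (Set.ncard_insert_le _ _) ?_
    have : {π : ∀ _ : ℕ, Fin K → Bool | ∃ h < H, π = fun i _ => decide (i = h)}.ncard ≤ H := by
      rw [himg]
      refine le_trans (Set.ncard_image_le (Set.finite_Iio H)) ?_
      simpa [Set.ncard_eq_toFinset_card'] using (le_of_eq (Nat.card_Iio H))
    omega
  have petal : ∀ I : Finset ((_ : ℕ) × Fin K), I.card ≤ ℓ → (∀ p ∈ I, p.1 < H) →
      IsPetal (S := fun _ => Fin K) H (coreClass K H) (↑I)
        (fun h s => decide (⟨h, s⟩ ∈ I)) := by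
    intro I _ hIH h h' hhh' _ σ α hcons
    by_cases hvisit : ∃ i, h < i ∧ i ≤ h' ∧ (⟨i, σ i⟩ : (_ : ℕ) × Fin K) ∈ I
    · right
      obtain ⟨i, hi1, hi2, hi3⟩ := hvisit
      exact ⟨i, hi1, hi2, by simpa using hi3⟩
    · left
      push_neg at hvisit
      by_cases hh : (⟨h, σ h⟩ : (_ : ℕ) × Fin K) ∈ I
      · refine ⟨fun i _ => decide (i = h), Or.inr ⟨h, hIH _ hh, rfl⟩, ?_⟩
        intro i hi1 hi2
        rw [← hcons i hi1 hi2]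
        rcases eq_or_lt_of_le hi1 with heq | hlt
        · cases heq; simp [hh]
        · have hni : (⟨i, σ i⟩ : (_ : ℕ) × Fin K) ∉ I := by
            have := hvisit i hlt hi2
            simpa using this
          simp [hni, Nat.ne_of_gt hlt]
      · refine ⟨fun _ _ => false, Or.inl rfl, ?_⟩
        intro i hi1 hi2
        rw [← hcons i hi1 hi2]
        rcases eq_or_lt_of_le hi1 with heq | hlt
        · cases heq; simp [hh]
        · have hni : (⟨i, σ i⟩ : (_ : ℕ) × Fin K) ∉ I := by
            have := hvisit i hlt hi2
            simpa using this
          simp [hni]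
  refine ⟨hcard, petal, coreClass K H, hcorefin, hcard, ?_⟩
  rintro π ⟨I, hIl, hIH, rfl⟩
  exact ⟨↑I, I.finite_toSet, by simpa [Set.ncard_coe_finset] using hIl, petal I hIl hIH⟩
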